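/- A convexity space is a convex geometry (i.e. for every convex K and distinct x, y ∉ K, y ∈ co(K ∪ {x}) implies x ∉ co(K ∪ {y})) if and only if every polytope is the convex hull of its extreme points. -/
import Mathlib


/-- An abstract convexity on a set `X`. -/
structure Convexity (X : Type*) where
  sets : Set (Set X)
  empty_mem : ∅ ∈ sets
  sInter_mem : ∀ 𝒞 : Set (Set X), 𝒞 ⊆ sets → ⋂₀ 𝒞 ∈ sets
  directed_sUnion_mem : ∀ 𝒞 : Set (Set X), 𝒞 ⊆ sets → 𝒞.Nonempty →
    DirectedOn (· ⊆ ·) 𝒞 → ⋃₀ 𝒞 ∈ sets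

/-- The convex hull with respect to a convexity. -/
def Convexity.hull {X : Type*} (c : Convexity X) (A : Set X) : Set X :=
  ⋂₀ {C | C ∈ c.sets ∧ A ⊆ C}

/-- The convex geometry (anti-exchange) property. -/
def Convexity.IsConvexGeometry {X : Type*} (c : Convexity X) : Prop :=
  ∀ K ∈ c.sets, ∀ x y : X, x ≠ y → x ∉ K → y ∉ K →
    y ∈ c.hull (K ∪ {x}) → x ∉ c.hull (K ∪ {y})

namespace Convexity

variable {X : Type*} (c : Convexity X)

lemma subset_hull (A : Set X) : A ⊆ c.hull A := fun x hx =>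
  Set.mem_sInter.2 fun _ hC => hC.2 hx

lemma hull_mem (A : Set X) : c.hull A ∈ c.sets :=
  c.sInter_mem _ fun _ hC => hC.1

lemma hull_min {A C : Set X} (hAC : A ⊆ C) (hC : C ∈ c.sets) : c.hull A ⊆ C :=
  Set.sInter_subset_of_mem ⟨hC, hAC⟩

lemma hull_mono {A B : Set X} (h : A ⊆ B) : c.hull A ⊆ c.hull B :=
  c.hull_min (h.trans (c.subset_hull B)) (c.hull_mem B)

lemma hull_eq_self {C : Set X} (hC : C ∈ c.sets) : c.hull C = C :=
  le_antisymm (c.hull_min le_rfl hC) (c.subset_hull C)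

/-- Domain finiteness: the hull is the union of hulls of finite subsets. -/
lemma mem_hull_finite {A : Set X} {x : X} (hx : x ∈ c.hull A) :
    ∃ F : Finset X, ↑F ⊆ A ∧ x ∈ c.hull ↑F := by
  classical
  set 𝒞 : Set (Set X) := {S | ∃ F : Finset X, ↑F ⊆ A ∧ S = c.hull ↑F} with h𝒞
  have hsub : 𝒞 ⊆ c.sets := by
    rintro S ⟨F, -, rfl⟩; exact c.hull_mem _
  have hne : 𝒞.Nonempty := ⟨c.hull (↑(∅ : Finset X)), ∅, by simp, rfl⟩
  have hdir : DirectedOn (· ⊆ ·) 𝒞 := by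
    rintro S₁ ⟨F₁, hF₁, rfl⟩ S₂ ⟨F₂, hF₂, rfl⟩
    refine ⟨c.hull ↑(F₁ ∪ F₂), ⟨F₁ ∪ F₂, ?_, rfl⟩, ?_, ?_⟩
    · push_cast; exact Set.union_subset hF₁ hF₂
    · exact c.hull_mono (by push_cast; exact Set.subset_union_left)
    · exact c.hull_mono (by push_cast; exact Set.subset_union_right)
  have hU : ⋃₀ 𝒞 ∈ c.sets := c.directed_sUnion_mem 𝒞 hsub hne hdir
  have hAU : A ⊆ ⋃₀ 𝒞 := by
    intro a ha
    exact ⟨c.hull ↑({a} : Finset X), ⟨{a}, by simpa using ha, rfl⟩,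
      c.subset_hull _ (by simp)⟩
  obtain ⟨S, ⟨F, hF, rfl⟩, hxS⟩ := c.hull_min hAU hU hx
  exact ⟨F, hF, hxS⟩

/-- Key lemma: under anti-exchange, if `a ∉ K` and every element of a finite set `G`
lies in `hull (K ∪ {a})` but not in `K` and differs from `a`, then
`a ∉ hull (K ∪ G)`. -/
lemma key (hc : c.IsConvexGeometry) {K : Set X} (hK : K ∈ c.sets) {a : X} (ha : a ∉ K) :
    ∀ G : Finset X, (∀ g ∈ G, g ≠ a ∧ g ∉ K ∧ g ∈ c.hull (K ∪ {a})) →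
      a ∉ c.hull (K ∪ ↑G) := by
  classical
  intro G
  induction G using Finset.strongInduction with
  | _ G ih =>
    intro hG haG
    rcases G.eq_empty_or_nonempty with rfl | ⟨g, hg⟩
    · rw [Finset.coe_empty, Set.union_empty, c.hull_eq_self hK] at haG
      exact ha haG
    · set K' := c.hull (K ∪ ↑(G.erase g)) with hK'def
      have hK'mem : K' ∈ c.sets := c.hull_mem _
      have haK' : a ∉ K' :=
        ih (G.erase g) (Finset.erase_ssubset hg)
          (fun x hx => hG x (Finset.mem_of_mem_erase hx))
      have hKsub : K ⊆ K' := Set.subset_union_left.trans (c.subset_hull _)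
      have hunion : K ∪ ↑G ⊆ K' ∪ {g} := by
        rintro x (hx | hx)
        · exact Or.inl (hKsub hx)
        · by_cases hxg : x = g
          · exact Or.inr (by simp [hxg])
          · exact Or.inl (c.subset_hull _ (Or.inr (by
              exact_mod_cast Finset.mem_erase.2 ⟨hxg, by exact_mod_cast hx⟩)))
      obtain ⟨hga, hgK, hgh⟩ := hG g hg
      have hgK' : g ∉ K' := by
        intro hgK'
        have hsub' : K ∪ ↑G ⊆ K' := by
          intro x hx
          rcases hunion hx with h | h
          · exact h
          · rwa [Set.mem_singleton_iff.1 h]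
        exact haK' (c.hull_min hsub' hK'mem haG)
      have haKg : a ∈ c.hull (K' ∪ {g}) := c.hull_mono hunion haG
      have := hc K' hK'mem g a hga hgK' haK' haKg
      exact this (c.hull_mono (Set.union_subset_union_left _ hKsub) hgh)

/-- If `a` is in a minimal spanning set, it is an extreme point of the polytope. -/
lemma extreme_of_not_mem_hull_erase (hc : c.IsConvexGeometry) {F₀ : Finset X} {a : X}
    (hmin : a ∉ c.hull (↑F₀ \ {a})) :
    a ∉ c.hull (c.hull ↑F₀ \ {a}) := by
  classical
  intro hmem
  set K := c.hull ((↑F₀ : Set X) \ {a}) with hKdef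
  have hKmem : K ∈ c.sets := c.hull_mem _
  obtain ⟨G₀, hG₀sub, hG₀mem⟩ := c.mem_hull_finite hmem
  set G : Finset X := G₀.filter (· ∉ K) with hGdef
  have hPsub : c.hull ↑F₀ ⊆ c.hull (K ∪ {a}) := by
    apply c.hull_mono
    intro x hx
    by_cases hxa : x = a
    · exact Or.inr (by simp [hxa])
    · exact Or.inl (c.subset_hull _ ⟨hx, hxa⟩)
  have haG : a ∈ c.hull (K ∪ ↑G) := by
    refine c.hull_mono ?_ hG₀mem
    intro x hx
    by_cases hxK : x ∈ K
    · exact Or.inl hxK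
    · refine Or.inr ?_
      simp only [hGdef, Finset.coe_filter, Set.mem_setOf_eq]
      exact ⟨by exact_mod_cast hx, hxK⟩
  refine c.key hc hKmem hmin G (fun g hg => ?_) haG
  obtain ⟨hgG₀, hgK⟩ := Finset.mem_filter.1 hg
  have hgP := hG₀sub hgG₀
  exact ⟨fun h => hgP.2 (by simp [h]), by simpa using hgK, hPsub hgP.1⟩

end Convexity

/-- Jamison–Edelman: a convexity space is a convex geometry iff every polytope
is the convex hull of its extreme points. -/
theorem convexGeometry_iff_polytopes_hull_extreme {X : Type*} (c : Convexity X) :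
    c.IsConvexGeometry ↔
      ∀ F : Finset X,
        c.hull ↑F = c.hull {x | x ∈ c.hull ↑F ∧ x ∉ c.hull (c.hull ↑F \ {x})} := by
  classical
  constructor
  · intro hc F
    set P := c.hull (↑F : Set X) with hPdef
    set E := {x | x ∈ P ∧ x ∉ c.hull (P \ {x})} with hEdef
    have hEP : E ⊆ P := fun x hx => hx.1
    refine le_antisymm ?_ (c.hull_min hEP (c.hull_mem _))
    -- find a minimal spanning subset
    have hex : ∃ n, ∃ G : Finset X, G.card = n ∧ ↑G ⊆ (↑F : Set X) ∧ c.hull ↑G = P :=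
      ⟨F.card, F, rfl, subset_rfl, rfl⟩
    obtain ⟨G, hcard, hGsub, hGhull⟩ := Nat.find_spec hex
    have hGmin : ∀ a ∈ G, a ∉ c.hull ((↑G : Set X) \ {a}) := by
      intro a haG hmem
      have heq : c.hull ↑(G.erase a) = P := by
        rw [Finset.coe_erase, ← hGhull]
        refine le_antisymm (c.hull_mono Set.diff_subset) ?_
        refine c.hull_min ?_ (c.hull_mem _)
        intro x hx
        by_cases hxa : x = a
        · rwa [hxa]
        · exact c.subset_hull _ ⟨hx, hxa⟩
      have hlt : (G.erase a).card < Nat.find hex := by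
        rw [← hcard]
        exact Finset.card_erase_lt_of_mem haG
      exact Nat.find_min hex hlt
        ⟨G.erase a, rfl, (Finset.coe_subset.2 (Finset.erase_subset a G)).trans hGsub, heq⟩
    have hGE : (↑G : Set X) ⊆ E := by
      intro a haG
      have haG' : a ∈ G := by exact_mod_cast haG
      refine ⟨hGhull ▸ c.subset_hull _ haG, ?_⟩
      have := c.extreme_of_not_mem_hull_erase hc (hGmin a haG')
      rwa [hGhull] at this
    rw [← hGhull]
    exact c.hull_mono hGE
  · intro h K hK x y hxy hxK hyK hy hx
    obtain ⟨Fy, hFysub, hFymem⟩ := c.mem_hull_finite hy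
    obtain ⟨Fx, hFxsub, hFxmem⟩ := c.mem_hull_finite hx
    set F' : Finset X := Fy.erase x with hF'def
    set G' : Finset X := Fx.erase y with hG'def
    set H : Finset X := F' ∪ G' with hHdef
    set S : Finset X := insert x (insert y H) with hSdef
    set P := c.hull (↑S : Set X) with hPdef
    set E := {z | z ∈ P ∧ z ∉ c.hull (P \ {z})} with hEdef
    have hHK : (↑H : Set X) ⊆ K := by
      intro z hz
      rcases Finset.mem_union.1 (by exact_mod_cast hz) with hz' | hz'
      · rcases hFysub (Finset.mem_of_mem_erase hz') with h' | h'
        · exact h'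
        · exact absurd (Set.mem_singleton_iff.1 h') (Finset.ne_of_mem_erase hz')
      · rcases hFxsub (Finset.mem_of_mem_erase hz') with h' | h'
        · exact h'
        · exact absurd (Set.mem_singleton_iff.1 h') (Finset.ne_of_mem_erase hz')
    have hSP : (↑S : Set X) ⊆ P := c.subset_hull _
    have hyP : y ∈ P := hSP (by simp [hSdef])
    have hxP : x ∈ P := hSP (by simp [hSdef])
    -- x is not extreme
    have hxnE : x ∈ c.hull (P \ {x}) := by
      refine c.hull_mono ?_ (c.hull_mono (show (↑Fx : Set X) ⊆ ↑G' ∪ {y} from ?_) hFxmem)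
      · rintro z (hz | hz)
        · have hzS : z ∈ (↑S : Set X) := by
            simp only [hSdef, Finset.coe_insert, Set.mem_insert_iff]
            right; right
            exact_mod_cast Finset.mem_union.2 (Or.inr (by exact_mod_cast hz))
          exact ⟨hSP hzS, fun hzx => hxK (hHK (by
            exact_mod_cast Finset.mem_union.2 (Or.inr (by
              rw [← Set.mem_singleton_iff.1 hzx] at *; exact_mod_cast hz))))⟩
        · rw [Set.mem_singleton_iff.1 hz]
          exact ⟨hyP, fun h => hxy (Set.mem_singleton_iff.1 h).symm⟩
      · intro z hz
        by_cases hzy : z = y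
        · exact Or.inr (by simp [hzy])
        · exact Or.inl (by exact_mod_cast Finset.mem_erase.2 ⟨hzy, by exact_mod_cast hz⟩)
    have hynE : y ∈ c.hull (P \ {y}) := by
      refine c.hull_mono ?_ (c.hull_mono (show (↑Fy : Set X) ⊆ ↑F' ∪ {x} from ?_) hFymem)
      · rintro z (hz | hz)
        · have hzS : z ∈ (↑S : Set X) := by
            simp only [hSdef, Finset.coe_insert, Set.mem_insert_iff]
            right; right
            exact_mod_cast Finset.mem_union.2 (Or.inl (by exact_mod_cast hz))
          exact ⟨hSP hzS, fun hzy => hyK (hHK (by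
            exact_mod_cast Finset.mem_union.2 (Or.inl (by
              rw [← Set.mem_singleton_iff.1 hzy] at *; exact_mod_cast hz))))⟩
        · rw [Set.mem_singleton_iff.1 hz]
          exact ⟨hxP, fun h => hxy (Set.mem_singleton_iff.1 h)⟩
      · intro z hz
        by_cases hzx : z = x
        · exact Or.inr (by simp [hzx])
        · exact Or.inl (by exact_mod_cast Finset.mem_erase.2 ⟨hzx, by exact_mod_cast hz⟩)
    -- extreme points are in H
    have hEH : E ⊆ (↑H : Set X) := by
      rintro z ⟨hzP, hz⟩
      have hzS : z ∈ (↑S : Set X) := by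
        by_contra hzS
        have hsub : (↑S : Set X) ⊆ P \ {z} := fun w hw =>
          ⟨hSP hw, fun hwz => hzS (by rwa [Set.mem_singleton_iff.1 hwz] at hw)⟩
        exact hz (c.hull_mono hsub hzP)
      simp only [hSdef, Finset.coe_insert, Set.mem_insert_iff] at hzS
      rcases hzS with rfl | rfl | hzH
      · exact absurd hxnE hz
      · exact absurd hynE hz
      · exact hzH
    have hPK : P ⊆ K := by
      rw [hPdef, h S]
      exact c.hull_min (fun z hz => hHK (hEH hz)) hK
    exact hxK (hPK hxP)
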